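/- Let u₀ : ℝ → ℝ be measurable and locally integrable with u₀(x) ≤ u_M for all x, let c > 0, Δx > 0, Δt > 0, λ = Δt/Δx with c·λ ≤ 1, and fix x₊ ∈ ℝ with x₋ = x₊ − Δx. Define ū_j = (1/Δx)∫_{x₋}^{x₊} u₀(x) dx, ū_{j−1} = (1/Δx)∫_{x₋−Δx}^{x₋} u₀(x) dx, and f̌₊ = (c/Δt)∫₀^{Δt} u₀(x₊ − c t) dt. Then ū_j − λ·(f̌₊ − c·ū_{j−1}) ≤ u_M. (This is Theorem 3.2 of the paper instantiated to the linear flux f(u) = c u with c > 0, where the upwind Godunov flux at the left interface is f(ū_{j−1}) = c·ū_{j−1}.) -/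

import Mathlib

open MeasureTheory intervalIntegral

theorem godunov_limited_update_max_pos_speed
    (u₀ : ℝ → ℝ) (hmeas : Measurable u₀) (hu : MeasureTheory.LocallyIntegrable u₀)
    (u_M : ℝ) (hbound : ∀ x, u₀ x ≤ u_M)
    (c Δx Δt lam xp xm : ℝ) (hc : 0 < c) (hΔx : 0 < Δx) (hΔt : 0 < Δt)
    (hlam : lam = Δt / Δx) (hcfl : c * lam ≤ 1) (hx : xm = xp - Δx)
    (ubar ubarm : ℝ)
    (hubar : ubar = (1 / Δx) * ∫ x in xm..xp, u₀ x)
    (hubarm : ubarm = (1 / Δx) * ∫ x in (xm - Δx)..xm, u₀ x)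
    (fp : ℝ)
    (hfp : fp = (c / Δt) * ∫ t in (0:ℝ)..Δt, u₀ (xp - c * t)) :
    ubar - lam * (fp - c * ubarm) ≤ u_M := by
  have hint : ∀ a b : ℝ, IntervalIntegrable u₀ volume a b := fun a b =>
    intervalIntegrable_iff.mpr
      ((hu.integrableOn_isCompact isCompact_uIcc).mono_set Set.uIoc_subset_uIcc)
  -- CFL gives c*Δt ≤ Δx
  have hcΔt : c * Δt ≤ Δx := by
    rw [hlam] at hcfl
    have := mul_le_mul_of_nonneg_right hcfl hΔx.le
    rw [one_mul] at this
    calc c * Δt = c * (Δt / Δx) * Δx := by field_simp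
    _ ≤ Δx := this
  set a := xp - c * Δt with ha
  have hxma : xm ≤ a := by rw [hx, ha]; linarith
  have haxp : a ≤ xp := by rw [ha]; nlinarith [mul_pos hc hΔt]
  -- change of variables in fp
  have hsub : (∫ t in (0:ℝ)..Δt, u₀ (xp - c * t)) = c⁻¹ * ∫ x in a..xp, u₀ x := by
    have h1 := intervalIntegral.integral_comp_mul_left (fun s => u₀ (xp - s)) hc.ne'
      (a := 0) (b := Δt)
    have h2 := intervalIntegral.integral_comp_sub_left u₀ xp (a := c * 0) (b := c * Δt)
    simp only [smul_eq_mul, mul_zero, sub_zero] at h1 h2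
    rw [h1, h2]
  set B := ∫ x in (xm - Δx)..xm, u₀ x with hB
  set C := ∫ x in a..xp, u₀ x with hC
  set D := ∫ x in xm..a, u₀ x with hD
  have hA : (∫ x in xm..xp, u₀ x) = D + C :=
    (intervalIntegral.integral_add_adjacent_intervals (hint xm a) (hint a xp)).symm
  -- bounds
  have hbnd : ∀ p q : ℝ, p ≤ q → (∫ x in p..q, u₀ x) ≤ (q - p) * u_M := by
    intro p q hpq
    have := intervalIntegral.integral_mono_on (μ := volume) hpq (hint p q)
      (intervalIntegrable_const (c := u_M)) (fun x _ => hbound x)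
    simpa [smul_eq_mul] using this
  have hDle : D ≤ (Δx - c * Δt) * u_M := by
    have h := hbnd xm a hxma
    rw [show (a - xm) * u_M = (Δx - c * Δt) * u_M by rw [ha, hx]; ring] at h
    exact h
  have hBle : B ≤ Δx * u_M := by
    have h := hbnd (xm - Δx) xm (by linarith)
    rw [show xm - (xm - Δx) = Δx by ring] at h
    exact h
  have hkey : ubar - lam * (fp - c * ubarm) = D / Δx + (c * Δt * B) / (Δx * Δx) := by
    rw [hubar, hubarm, hfp, hlam, hA, hsub]
    field_simp
    ring
  rw [hkey]
  have hcdt : (0:ℝ) ≤ c * Δt := by positivity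
  calc D / Δx + (c * Δt * B) / (Δx * Δx)
      ≤ ((Δx - c * Δt) * u_M) / Δx + (c * Δt * (Δx * u_M)) / (Δx * Δx) := by
        gcongr
    _ = u_M := by field_simp; ring
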